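/- Let m ≥ 1 and let f : (Fin m → ℝ) → ℂ be of class C². Define F : (Fin m → ℂ) → ℂ by F(z) = f(x_z) + i·Σ_{j} (D f(x_z))(δ_j) · Im(z_j), where x_z = (Re(z_j))_{j} ∈ ℝ^m, D f(x) denotes the real Fréchet derivative of f at x, and δ_j is the j-th standard basis vector of ℝ^m. Then: (i) F(x) = f(x) for every real point x (i.e., F agrees with f on the canonical copy of ℝ^m inside ℂ^m); (ii) F is of class C¹ over ℝ on all of ℂ^m; and (iii) at every real point x ∈ ℝ^m ⊂ ℂ^m the real Fréchet derivative of F is ℂ-linear, i.e., (fderiv ℝ F x)(i·v) = i·(fderiv ℝ F x)(v) for all v ∈ ℂ^m. -/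

import Mathlib

open Complex

set_option maxHeartbeats 1000000 in
/-- First-order ∂̄-flat extension: given a `C²` function `f` on `ℝ^m`, the function
`F(z) = f(Re z) + i·Σⱼ (Df(Re z))(δⱼ)·Im(zⱼ)` on `ℂ^m` agrees with `f` on `ℝ^m`,
is of class `C¹` over `ℝ`, and its real Fréchet derivative is ℂ-linear at every
real point (i.e. `F` is ∂̄-flat to first order on `ℝ^m`). -/
theorem dbar_flat_first_order_extension
    (m : ℕ) (hm : 1 ≤ m) (f : (Fin m → ℝ) → ℂ) (hf : ContDiff ℝ 2 f)
    (F : (Fin m → ℂ) → ℂ)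
    (hF : F = fun z => f (fun j => (z j).re) +
      Complex.I * ∑ j, fderiv ℝ f (fun j => (z j).re) (Pi.single j 1) * ((z j).im : ℂ)) :
    (∀ x : Fin m → ℝ, F (fun j => (x j : ℂ)) = f x) ∧
    ContDiff ℝ 1 F ∧
    (∀ (x : Fin m → ℝ) (v : Fin m → ℂ),
      fderiv ℝ F (fun j => (x j : ℂ)) (Complex.I • v) =
        Complex.I * fderiv ℝ F (fun j => (x j : ℂ)) v) := by
  subst hF
  -- the real-part map as a continuous linear map
  set R : (Fin m → ℂ) →L[ℝ] (Fin m → ℝ) :=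
    ContinuousLinearMap.pi (fun j => Complex.reCLM.comp (ContinuousLinearMap.proj j)) with hRdef
  have hRapp : ∀ z : Fin m → ℂ, R z = fun j => (z j).re := fun z => rfl
  have hg : ContDiff ℝ 1 (fderiv ℝ f) := hf.fderiv_right (le_refl _)
  refine ⟨?_, ?_, ?_⟩
  · intro x
    simp
  · apply ContDiff.add
    · exact (hf.of_le one_le_two).comp R.contDiff
    · apply contDiff_const.mul
      apply ContDiff.sum
      intro j _
      exact ((hg.comp R.contDiff).clm_apply contDiff_const).mul
        (Complex.ofRealCLM.contDiff.comp
          (Complex.imCLM.contDiff.comp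
            (ContinuousLinearMap.proj (R := ℝ) (φ := fun _ : Fin m => ℂ) j).contDiff))
  · intro x v
    have hRz₀ : R (fun j => ((x j : ℝ) : ℂ)) = x := by
      funext j; simp [hRapp]
    -- derivative of the first piece
    have h1 : HasFDerivAt (fun z => f (R z)) ((fderiv ℝ f x).comp R)
        (fun j => ((x j : ℝ) : ℂ)) := by
      have := ((hf.differentiable (by norm_num)) (R (fun j => ((x j : ℝ) : ℂ)))).hasFDerivAt
      rw [hRz₀] at this
      exact this.comp _ R.hasFDerivAt
    -- derivatives of the summands
    have hc : ∀ j, HasFDerivAt (fun z => fderiv ℝ f (R z) (Pi.single j 1))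
        (fderiv ℝ (fun z => fderiv ℝ f (R z) (Pi.single j 1)) (fun j => ((x j : ℝ) : ℂ)))
        (fun j => ((x j : ℝ) : ℂ)) := by
      intro j
      exact (((hg.comp R.contDiff).clm_apply contDiff_const).differentiable one_ne_zero
        _).hasFDerivAt
    have hd : ∀ j : Fin m, HasFDerivAt (fun z : Fin m → ℂ => ((z j).im : ℂ))
        (Complex.ofRealCLM.comp (Complex.imCLM.comp
          (ContinuousLinearMap.proj (R := ℝ) (φ := fun _ : Fin m => ℂ) j)))
        (fun j => ((x j : ℝ) : ℂ)) :=
      fun j => (Complex.ofRealCLM.comp (Complex.imCLM.comp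
        (ContinuousLinearMap.proj (R := ℝ) (φ := fun _ : Fin m => ℂ) j))).hasFDerivAt
    have hsum : HasFDerivAt
        (fun z => ∑ j, fderiv ℝ f (R z) (Pi.single j 1) * ((z j).im : ℂ))
        (∑ j, (fderiv ℝ f (R (fun j => ((x j : ℝ) : ℂ))) (Pi.single j 1) •
            (Complex.ofRealCLM.comp (Complex.imCLM.comp
              (ContinuousLinearMap.proj (R := ℝ) (φ := fun _ : Fin m => ℂ) j))) +
          ((((x j : ℝ) : ℂ)).im : ℂ) •
            fderiv ℝ (fun z => fderiv ℝ f (R z) (Pi.single j 1)) (fun j => ((x j : ℝ) : ℂ))))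
        (fun j => ((x j : ℝ) : ℂ)) :=
      HasFDerivAt.fun_sum (fun j _ => (hc j).mul (hd j))
    have hmul := hsum.const_mul Complex.I
    have hFder : HasFDerivAt (fun z => f (fun j => (z j).re) +
        Complex.I * ∑ j, fderiv ℝ f (fun j => (z j).re) (Pi.single j 1) * ((z j).im : ℂ))
        ((fderiv ℝ f x).comp R +
          Complex.I • ∑ j,
            (fderiv ℝ f (R (fun j => ((x j : ℝ) : ℂ))) (Pi.single j 1) •
              (Complex.ofRealCLM.comp (Complex.imCLM.comp
                (ContinuousLinearMap.proj (R := ℝ) (φ := fun _ : Fin m => ℂ) j))) +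
            ((((x j : ℝ) : ℂ)).im : ℂ) •
              fderiv ℝ (fun z => fderiv ℝ f (R z) (Pi.single j 1)) (fun j => ((x j : ℝ) : ℂ))))
        (fun j => ((x j : ℝ) : ℂ)) := h1.add hmul
    have hfd := hFder.fderiv
    have key : ∀ w : Fin m → ℂ,
        fderiv ℝ (fun z => f (fun j => (z j).re) +
          Complex.I * ∑ j, fderiv ℝ f (fun j => (z j).re) (Pi.single j 1) * ((z j).im : ℂ))
          (fun j => ((x j : ℝ) : ℂ)) w = ∑ j, fderiv ℝ f x (Pi.single j 1) * w j := by
      intro w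
      rw [hfd]
      simp only [hRz₀, Complex.ofReal_im, Complex.ofReal_zero, zero_smul, add_zero,
        ContinuousLinearMap.add_apply, ContinuousLinearMap.coe_comp', Function.comp_apply,
        ContinuousLinearMap.coe_smul', Pi.smul_apply, ContinuousLinearMap.coe_sum',
        Finset.sum_apply, ContinuousLinearMap.smul_apply, Complex.ofRealCLM_apply,
        Complex.imCLM_apply, ContinuousLinearMap.proj_apply, smul_eq_mul]
      have hRw : R w = ∑ j, (w j).re • (Pi.single j 1 : Fin m → ℝ) := by
        funext k
        simp [hRapp, Pi.single_apply, Finset.sum_apply, mul_comm]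
      rw [hRw, map_sum, Finset.mul_sum, ← Finset.sum_add_distrib]
      refine Finset.sum_congr rfl (fun j _ => ?_)
      rw [map_smul, Complex.real_smul]
      conv_rhs => rw [← Complex.re_add_im (w j)]
      ring
    rw [key, key, Finset.mul_sum]
    refine Finset.sum_congr rfl (fun j _ => ?_)
    simp only [Pi.smul_apply, smul_eq_mul]
    ring
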